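/- Let G be a connected graph and let T_1 and T_2 be two search trees on G. Then there exists a finite sequence of rotations transforming T_1 into T_2; that is, the rotation graph of search trees on G is connected. -/

import Mathlib

/-- A rooted tree (or the empty tree) on a subset `supp` of the vertex type `V`,
represented by parent pointers. -/
structure RTree (V : Type) where
  supp : Finset V
  parent : V → Option V
  parent_eq_none : ∀ v ∉ supp, parent v = none
  mem_of_parent : ∀ {v w : V}, parent v = some w → v ∈ supp ∧ w ∈ supp
  root_unique : ∀ v ∈ supp, ∀ w ∈ supp, parent v = none → parent w = none → v = w
  reaches_root : ∀ v ∈ supp, ∃ r ∈ supp, parent r = none ∧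
    Relation.ReflTransGen (fun a b => parent a = some b) v r

namespace RTree

variable {V : Type}

/-- `T.Anc a v` : `a` is an ancestor of `v` in `T` (possibly `a = v`). -/
def Anc (T : RTree V) (a v : V) : Prop :=
  Relation.ReflTransGen (fun x y => T.parent x = some y) v a

/-- `a` is a strict ancestor of `v`. -/
def StrictAnc (T : RTree V) (a v : V) : Prop := a ≠ v ∧ T.Anc a v

/-- The set of vertices of the subtree rooted at `a` (the descendants of `a`). -/
def descSet (T : RTree V) (a : V) : Set V := {v | T.Anc a v}

/-- The depth of a node: the number of nodes on the path from the root to it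
(the root has depth 1). -/
noncomputable def depth (T : RTree V) (v : V) : ℕ := Set.ncard {a | T.Anc a v}

def IsRoot (T : RTree V) (r : V) : Prop := r ∈ T.supp ∧ T.parent r = none

end RTree

/-- The restriction of a graph to a set of vertices (keeping the ambient vertex type). -/
def restrictG {V : Type} (G : SimpleGraph V) (U : Set V) : SimpleGraph V where
  Adj a b := G.Adj a b ∧ a ∈ U ∧ b ∈ U
  symm := ⟨fun a b ⟨h, ha, hb⟩ => ⟨h.symm, hb, ha⟩⟩
  loopless := ⟨fun a ⟨h, _, _⟩ => G.irrefl h⟩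

/-- `T` is a search tree on the induced subgraph `G[U]`: its nodes are the vertices of `U`,
the subtree of every node induces a connected subgraph, and every edge of `G[U]` joins
two comparable nodes of `T`. -/
def IsSTGOn {V : Type} (G : SimpleGraph V) (U : Finset V) (T : RTree V) : Prop :=
  T.supp = U ∧
  (∀ v ∈ U, ((restrictG G ↑U).induce (T.descSet v)).Connected) ∧
  (∀ u v : V, u ∈ U → v ∈ U → G.Adj u v → T.Anc u v ∨ T.Anc v u)

/-- `T` is a search tree on the graph `G`. -/
def IsSTG {V : Type} [Fintype V] (G : SimpleGraph V) (T : RTree V) : Prop :=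
  IsSTGOn G Finset.univ T

/-- `T'` is obtained from `T` by rotating the edge `(p, c)` of `T`, where `p` is
the parent of `c`: `c` replaces `p` (becoming a child of `p`'s former parent, or the
root if `p` was the root), `p` becomes a child of `c`, `p` keeps its other children,
and each child `x` of `c` whose subtree contains a vertex of `G` adjacent to `p`
becomes a child of `p` (the other children of `c` stay children of `c`). -/
def IsRotationAt {V : Type} (G : SimpleGraph V) (T T' : RTree V) (p c : V) : Prop :=
  T.parent c = some p ∧
  T'.supp = T.supp ∧
  T'.parent c = T.parent p ∧
  T'.parent p = some c ∧
  (∀ x : V, x ≠ p → T.parent x = some c →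
    ((∃ u ∈ T.descSet x, G.Adj u p) → T'.parent x = some p) ∧
    (¬(∃ u ∈ T.descSet x, G.Adj u p) → T'.parent x = some c)) ∧
  (∀ x : V, x ≠ c → x ≠ p → T.parent x ≠ some c → T'.parent x = T.parent x)

/-- `T'` is obtained from `T` by a single rotation. -/
def IsRotation {V : Type} (G : SimpleGraph V) (T T' : RTree V) : Prop :=
  ∃ p c, IsRotationAt G T T' p c

/-- `T2` can be obtained from `T1` by exactly `k` rotations. -/
def ReachesIn {V : Type} (G : SimpleGraph V) : ℕ → RTree V → RTree V → Prop
  | 0, T1, T2 => T1 = T2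
  | k+1, T1, T2 => ∃ T', IsRotation G T1 T' ∧ ReachesIn G k T' T2

/-- Vertex type of the caterpillar `C(m_1, …, m_n)`: spine vertices `inl i` and
leg vertices `inr ⟨i, j⟩`. -/
abbrev CatV (n : ℕ) (m : Fin n → ℕ) : Type := Fin n ⊕ (Σ i : Fin n, Fin (m i))

/-- The caterpillar tree `C(m_1, …, m_n)`: the spine `s_1 - s_2 - ⋯ - s_n` is a path,
and leg `ℓ_{i,j}` is adjacent to `s_i`. -/
def caterpillar (n : ℕ) (m : Fin n → ℕ) : SimpleGraph (CatV n m) where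
  Adj x y :=
    match x, y with
    | Sum.inl i, Sum.inl j => i.val + 1 = j.val ∨ j.val + 1 = i.val
    | Sum.inl i, Sum.inr l => l.1 = i
    | Sum.inr l, Sum.inl i => l.1 = i
    | Sum.inr _, Sum.inr _ => False
  symm := ⟨by rintro (i | l) (j | l') h <;> simp_all <;> tauto⟩
  loopless := ⟨by rintro (i | l) h <;> simp_all⟩

/-- The (base 2) Shannon entropy `H(m_1, …, m_n) = ∑_{i : m_i > 0} (m_i/m) log (m/m_i)`. -/
noncomputable def shannonH {n : ℕ} (m : Fin n → ℕ) : ℝ :=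
  ∑ i, if 0 < m i then
    ((m i : ℝ) / (∑ j, (m j : ℝ))) * Real.logb 2 ((∑ j, (m j : ℝ)) / (m i : ℝ))
  else 0

/-- The parent function of the search tree `A(S, π)` on the caterpillar: the legs form a
path at the top of the tree, ordered bottom-to-top according to `π`, and the spine nodes
hang below, arranged according to the BST `S`. -/
def AParent {n : ℕ} {m : Fin n → ℕ} (S : RTree (Fin n))
    (π : Fin (∑ i, m i) ≃ (Σ i : Fin n, Fin (m i))) :
    CatV n m → Option (CatV n m) :=
  fun x => match x with
  | Sum.inl i =>
      match S.parent i with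
      | some j => some (Sum.inl j)
      | none => if h : 0 < ∑ i, m i then some (Sum.inr (π ⟨0, h⟩)) else none
  | Sum.inr l =>
      if h : (π.symm l).val + 1 < ∑ i, m i then
        some (Sum.inr (π ⟨(π.symm l).val + 1, h⟩))
      else none

/-- `T = A(S, π)`. -/
def IsA {n : ℕ} {m : Fin n → ℕ} (S : RTree (Fin n))
    (π : Fin (∑ i, m i) ≃ (Σ i : Fin n, Fin (m i))) (T : RTree (CatV n m)) : Prop :=
  T.supp = Finset.univ ∧ T.parent = AParent S π

/-- The parent function of the search tree `B(S)` on the caterpillar: every leg `ℓ_{i,j}`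
is a (childless) child of `s_i`, and the spine nodes are arranged according to `S`. -/
def BParent {n : ℕ} {m : Fin n → ℕ} (S : RTree (Fin n)) :
    CatV n m → Option (CatV n m) :=
  fun x => match x with
  | Sum.inl i => (S.parent i).map Sum.inl
  | Sum.inr l => some (Sum.inl l.1)

/-- `T = B(S)`. -/
def IsB {n : ℕ} {m : Fin n → ℕ} (S : RTree (Fin n)) (T : RTree (CatV n m)) : Prop :=
  T.supp = Finset.univ ∧ T.parent = BParent S

/-- `σ(π)`: the sequence of spine indices obtained from the leg ordering `π` by replacing
each leg `ℓ_{i,j}` with `i`. -/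
def sigmaOf {n : ℕ} {m : Fin n → ℕ}
    (π : Fin (∑ i, m i) ≃ (Σ i : Fin n, Fin (m i))) : List (Fin n) :=
  List.ofFn (fun j => (π j).1)

/-- Every leg node of `T` is bound, i.e. no leg node has a child. -/
def noFreeLegs {n : ℕ} {m : Fin n → ℕ} (T : RTree (CatV n m)) : Prop :=
  ∀ (x : CatV n m) (l : Σ i : Fin n, Fin (m i)), T.parent x ≠ some (Sum.inr l)

open Classical in
/-- The number of adjacent pairs in a list satisfying `P`. -/
noncomputable def pairAlt {α : Type} (P : α → α → Prop) : List α → ℕ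
  | [] => 0
  | [_] => 0
  | a :: b :: t => (if P a b then 1 else 0) + pairAlt P (b :: t)

open Classical in
/-- Wilber's quantity `λ(S, u, σ)`: 0 if `u` has at most one child; otherwise the number
of adjacent pairs in the restriction of `σ` to the subtree of `u` that do not both lie in
the subtree of one child of `u` and are not both equal to `u`. -/
noncomputable def wilberLam {n : ℕ} (S : RTree (Fin n)) (u : Fin n) (σ : List (Fin n)) : ℕ :=
  if (∃ v w : Fin n, v ≠ w ∧ S.parent v = some u ∧ S.parent w = some u) then
    pairAlt (fun x y =>
      ¬((x = u ∧ y = u) ∨ ∃ ch, S.parent ch = some u ∧ S.Anc ch x ∧ S.Anc ch y))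
      (σ.filter (fun x => decide (S.Anc u x)))
  else 0

/-- `λ'(S, u, σ) = λ(S, u, σ)` plus the number of occurrences of `u` in `σ`. -/
noncomputable def wilberLam' {n : ℕ} (S : RTree (Fin n)) (u : Fin n)
    (σ : List (Fin n)) : ℕ :=
  wilberLam S u σ + σ.count u

/-- Wilber's first lower bound `Λ'(S, σ) = ∑_u λ'(S, u, σ)`. -/
noncomputable def wilberL' {n : ℕ} (S : RTree (Fin n)) (σ : List (Fin n)) : ℕ :=
  ∑ u : Fin n, wilberLam' S u σ

/-- `P` is the projection `T[U]` of `T` onto `U`: its nodes are the nodes of `T` in `U`,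
and the parent of `u` in `P` is the nearest strict ancestor of `u` in `T` that lies
in `U` (which is exactly the result of pruning the vertices outside `U` one by one). -/
def IsProjOn {V : Type} [DecidableEq V] (T : RTree V) (U : Finset V) (P : RTree V) : Prop :=
  P.supp = T.supp ∩ U ∧
  ∀ u w : V, P.parent u = some w ↔
    (u ∈ U ∧ w ∈ U ∧ T.StrictAnc w u ∧ ∀ z ∈ U, T.StrictAnc z u → T.Anc z w)

/-- `P` is obtained from `T` by pruning the vertex `v`. -/
def IsPruneOf {V : Type} [DecidableEq V] (T : RTree V) (v : V) (P : RTree V) : Prop :=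
  IsProjOn T (T.supp.erase v) P

/-- `PruneSeq T l P`: `P` is obtained from `T` by successively pruning the
vertices in the list `l`, in order. -/
def PruneSeq {V : Type} [DecidableEq V] : RTree V → List V → RTree V → Prop
  | T, [], P => P = T
  | T, v :: rest, P => ∃ P', IsPruneOf T v P' ∧ PruneSeq P' rest P

/-- The number of alternations (edges whose endpoints get different colors under `f`)
on the path from the root to `z`. -/
noncomputable def altAt {V K : Type} (f : V → K) (T : RTree V) (z : V) : ℕ :=
  Set.ncard {x | T.Anc x z ∧ ∃ y, T.parent x = some y ∧ f x ≠ f y}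

/-- The alternation number of `T` w.r.t. the coloring `f`: the maximum number of
alternations on a root-to-node path. -/
noncomputable def altNum {V K : Type} (f : V → K) (T : RTree V) : ℕ :=
  T.supp.sup (fun z => altAt f T z)

/- ===================== Auxiliary development ===================== -/

namespace RotAux

open Relation

variable {V : Type}

/-- One parent step. -/
def pstep (T : RTree V) : V → V → Prop := fun x y => T.parent x = some y

/-- Chain from `v` up to `a` (so `a` is an ancestor of `v`). -/
def Ch (T : RTree V) (v a : V) : Prop := Relation.ReflTransGen (pstep T) v a

lemma anc_iff_ch (T : RTree V) (a v : V) : T.Anc a v ↔ Ch T v a := Iff.rfl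

lemma ch_refl (T : RTree V) (v : V) : Ch T v v := ReflTransGen.refl

lemma ch_single {T : RTree V} {v a : V} (h : T.parent v = some a) : Ch T v a :=
  ReflTransGen.single h

lemma Ch.trans {T : RTree V} {a b c : V} (h1 : Ch T a b) (h2 : Ch T b c) : Ch T a c :=
  ReflTransGen.trans h1 h2

lemma ch_head {T : RTree V} {v w a : V} (h : T.parent v = some w) (h2 : Ch T w a) :
    Ch T v a := ReflTransGen.head h h2

lemma ch_tail {T : RTree V} {v w a : V} (h : Ch T v w) (h2 : T.parent w = some a) :
    Ch T v a := ReflTransGen.tail h h2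

lemma pstep_det {T : RTree V} {v a b : V} (h1 : T.parent v = some a)
    (h2 : T.parent v = some b) : a = b := by
  rw [h1] at h2; exact (Option.some.injEq _ _ ▸ h2)

/-- The chain upward from a vertex is linear. -/
lemma ch_total {T : RTree V} {a b c : V} (h1 : Ch T a b) (h2 : Ch T a c) :
    Ch T b c ∨ Ch T c b := by
  induction h1 using Relation.ReflTransGen.head_induction_on with
  | refl => exact Or.inl h2
  | @head x y hs ht ih =>
    rcases (Relation.ReflTransGen.cases_head h2) with rfl | ⟨z, hz, hzc⟩
    · exact Or.inr (ch_head hs ht)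
    · have : z = y := pstep_det hz hs
      subst this
      exact ih hzc

lemma ch_of_none {T : RTree V} {a b : V} (hn : T.parent a = none) (h : Ch T a b) :
    a = b := by
  rcases Relation.ReflTransGen.cases_head h with rfl | ⟨z, hz, _⟩
  · rfl
  · unfold pstep at hz; rw [hn] at hz; cases hz

lemma mem_supp_of_ch {T : RTree V} {a b : V} (h : Ch T a b) (hne : a ≠ b) :
    a ∈ T.supp ∧ b ∈ T.supp := by
  induction h using Relation.ReflTransGen.head_induction_on with
  | refl => exact absurd rfl hne
  | @head x y hs ht ih =>
    constructor
    · exact (T.mem_of_parent hs).1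
    · by_cases hyb : y = b
      · subst hyb; exact (T.mem_of_parent hs).2
      · exact (ih hyb).2

/-- Antisymmetry of the ancestor relation. -/
lemma ch_antisymm {T : RTree V} {a b : V} (h1 : Ch T a b) (h2 : Ch T b a) : a = b := by
  by_cases hab : a = b
  · exact hab
  · have ha : a ∈ T.supp := (mem_supp_of_ch h1 hab).1
    obtain ⟨r, _, hrn, hr⟩ := T.reaches_root a ha
    -- strong statement along the chain a → r
    have key : ∀ x, Ch T x r → ∀ y, Ch T x y → Ch T y x → x = y := by
      intro x hx
      induction hx using Relation.ReflTransGen.head_induction_on with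
      | refl => intro y hy hyx; exact ch_of_none hrn hy
      | @head u u2 hs ht ih =>
        intro y hy hyx
        by_cases hxy : u = y
        · exact hxy
        · rcases Relation.ReflTransGen.cases_head hy with rfl | ⟨z, hz, hzy⟩
          · rfl
          · have hzz : z = u2 := pstep_det hz hs
            rw [hzz] at hzy
            have hyx2 : Ch T y u2 := ch_tail hyx hs
            have hxy2 : u2 = y := ih y hzy hyx2
            subst hxy2
            have : u2 = u := ih u hyx (ch_single hs)
            exact absurd this.symm hxy
    exact key a hr b h1 h2

lemma not_pstep_self {T : RTree V} {a : V} (h : T.parent a = some a) : False := by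
  have ha : a ∈ T.supp := (T.mem_of_parent h).1
  obtain ⟨r, _, hrn, hr⟩ := T.reaches_root a ha
  have key : ∀ x, Ch T x r → T.parent x = some x → False := by
    intro x hx
    induction hx using Relation.ReflTransGen.head_induction_on with
    | refl => intro hc; rw [hrn] at hc; cases hc
    | @head x y hs ht ih =>
      intro hc
      have : x = y := pstep_det hc hs
      subst this
      exact ih hc
  exact key a hr h

/-- No two-cycles. -/
lemma no_two_cycle {T : RTree V} {a b : V} (h1 : T.parent a = some b)
    (h2 : T.parent b = some a) : False := by
  have : a = b := ch_antisymm (ch_single h1) (ch_single h2)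
  subst this
  exact not_pstep_self h1

/-- Extensionality of RTrees. -/
lemma rtree_ext {T1 T2 : RTree V} (h1 : T1.supp = T2.supp)
    (h2 : T1.parent = T2.parent) : T1 = T2 := by
  cases T1; cases T2; simp_all

/-- The last step of a nontrivial chain: the child of the top through which it passes. -/
lemma ch_to_child {T : RTree V} {a b : V} (h : Ch T a b) (hne : a ≠ b) :
    ∃ y, T.parent y = some b ∧ Ch T a y := by
  rcases Relation.ReflTransGen.cases_tail h with rfl | ⟨y, hy, hyb⟩
  · exact absurd rfl hne
  · exact ⟨y, hyb, hy⟩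

/- ===================== The rotation construction ===================== -/

open Classical in
/-- The parent function after rotating edge `(p,c)`. -/
noncomputable def rotP (G : SimpleGraph V) (T : RTree V) (p c : V) : V → Option V :=
  fun v =>
    if v = c then T.parent p
    else if v = p then some c
    else if T.parent v = some c then
      (if ∃ u, Ch T u v ∧ G.Adj u p then some p else some c)
    else T.parent v

def pstepR (G : SimpleGraph V) (T : RTree V) (p c : V) : V → V → Prop :=
  fun x y => rotP G T p c x = some y

def ChR (G : SimpleGraph V) (T : RTree V) (p c : V) : V → V → Prop :=
  Relation.ReflTransGen (pstepR G T p c)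

section RotSec

variable {G : SimpleGraph V} {T : RTree V} {p c : V}

lemma pstepR_cases {x y : V} (h : pstepR G T p c x y) :
    (x = c ∧ T.parent p = some y) ∨
    (x ≠ c ∧ x = p ∧ y = c) ∨
    (x ≠ c ∧ x ≠ p ∧ T.parent x = some c ∧ (∃ u, Ch T u x ∧ G.Adj u p) ∧ y = p) ∨
    (x ≠ c ∧ x ≠ p ∧ T.parent x = some c ∧ ¬(∃ u, Ch T u x ∧ G.Adj u p) ∧ y = c) ∨
    (x ≠ c ∧ x ≠ p ∧ T.parent x ≠ some c ∧ T.parent x = some y) := by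
  unfold pstepR rotP at h
  split_ifs at h with h1 h2 h3 h4
  · exact Or.inl ⟨h1, h⟩
  · exact Or.inr (Or.inl ⟨h1, h2, (Option.some.inj h).symm⟩)
  · exact Or.inr (Or.inr (Or.inl ⟨h1, h2, h3, h4, (Option.some.inj h).symm⟩))
  · exact Or.inr (Or.inr (Or.inr (Or.inl ⟨h1, h2, h3, h4, (Option.some.inj h).symm⟩)))
  · exact Or.inr (Or.inr (Or.inr (Or.inr ⟨h1, h2, h3, h⟩)))

variable (hpc : T.parent c = some p)

include hpc

lemma c_ne_p : c ≠ p := by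
  intro e; subst e; exact not_pstep_self hpc

lemma rotP_c : rotP G T p c c = T.parent p := by
  unfold rotP; simp

lemma rotP_p : rotP G T p c p = some c := by
  unfold rotP; rw [if_neg (Ne.symm (c_ne_p hpc)), if_pos rfl]

lemma rotP_other {x : V} (hxc : x ≠ c) (hxp : x ≠ p) (hx : T.parent x ≠ some c) :
    rotP G T p c x = T.parent x := by
  unfold rotP; rw [if_neg hxc, if_neg hxp, if_neg hx]

lemma not_ch_p_c : ¬ Ch T p c := by
  intro h
  have := ch_antisymm h (ch_single hpc)
  exact c_ne_p hpc this.symm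

lemma ch_c_elim {v : V} (h : Ch T c v) : c = v ∨ Ch T p v := by
  rcases Relation.ReflTransGen.cases_head h with rfl | ⟨z, hz, hzv⟩
  · exact Or.inl rfl
  · have : z = p := pstep_det hz hpc
    subst this; exact Or.inr hzv

lemma not_ch_p_child {x : V} (hx : T.parent x = some c) : ¬ Ch T p x :=
  fun h => not_ch_p_c hpc (ch_tail h hx)

lemma not_ch_c_of {v : V} (hnp : ¬ Ch T p v) (hvc : v ≠ c) : ¬ Ch T c v := by
  intro h
  rcases ch_c_elim hpc h with rfl | h2
  · exact hvc rfl
  · exact hnp h2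

omit hpc in
/-- Transfer of chains from `T` to the rotated tree along unchanged pointers. -/
lemma ch_fwd {a b : V} (h : Ch T a b)
    (H : ∀ v, Ch T a v → Ch T v b → v = b ∨ rotP G T p c v = T.parent v) :
    ChR G T p c a b := by
  have key : ∀ x, Ch T x b → Ch T a x → ChR G T p c x b := by
    intro x hx
    induction hx using Relation.ReflTransGen.head_induction_on with
    | refl => intro _; exact Relation.ReflTransGen.refl
    | @head u u2 hs ht ih =>
      intro hau
      rcases H u hau (ch_head hs ht) with rfl | he
      · exact Relation.ReflTransGen.refl
      · refine Relation.ReflTransGen.head ?_ (ih (ch_tail hau hs))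
        show rotP G T p c u = some u2
        rw [he]; exact hs
  exact key a h Relation.ReflTransGen.refl

/-- Unchanged subtrees: `v ∉ {c, p}` and `p` not a descendant of `v`. -/
lemma descR_eq_main {v : V} (hvc : v ≠ c) (hvp : v ≠ p) (hnp : ¬ Ch T p v) (u : V) :
    ChR G T p c u v ↔ Ch T u v := by
  constructor
  · intro hu
    induction hu using Relation.ReflTransGen.head_induction_on with
    | refl => exact Relation.ReflTransGen.refl
    | @head x u2 hs ht ih =>
      rcases pstepR_cases hs with ⟨rfl, hq⟩ | ⟨_, rfl, rfl⟩ | ⟨_, _, _, _, rfl⟩ |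
          ⟨_, _, _, _, rfl⟩ | ⟨_, _, _, hstep⟩
      · exact absurd (ch_head hq ih) hnp
      · exact absurd ih (not_ch_c_of hpc hnp hvc)
      · exact absurd ih hnp
      · exact absurd ih (not_ch_c_of hpc hnp hvc)
      · exact ch_head hstep ih
  · intro hu
    refine ch_fwd hu (fun w hw hwv => ?_)
    by_cases hwvne : w = v
    · exact Or.inl hwvne
    · right
      rcases Relation.ReflTransGen.cases_head hwv with rfl | ⟨z, hz, hzv⟩
      · exact absurd rfl hwvne
      · have hwp : w ≠ p := fun e => hnp (e ▸ hwv)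
        have hwc : w ≠ c := by
          intro e; subst e
          have : z = p := pstep_det hz hpc
          subst this; exact hnp hzv
        have hnwc : T.parent w ≠ some c := by
          intro e
          have : z = c := pstep_det hz e
          subst this
          exact (not_ch_c_of hpc hnp hvc) hzv
        exact rotP_other hpc hwc hwp hnwc

/-- Everything below `p` in `T` reaches `c` in the rotated tree. -/
lemma chR_to_c {u : V} (h : Ch T u p) : ChR G T p c u c := by
  induction h using Relation.ReflTransGen.head_induction_on with
  | refl =>
    exact Relation.ReflTransGen.single (show rotP G T p c p = some c from rotP_p hpc)
  | @head u u2 hs ht ih =>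
    by_cases huc : u = c
    · subst huc; exact Relation.ReflTransGen.refl
    · by_cases hup : u = p
      · exact Relation.ReflTransGen.single
          (show rotP G T p c u = some c by rw [hup]; exact rotP_p hpc)
      · by_cases hchild : T.parent u = some c
        · unfold ChR
          by_cases hcond : ∃ w, Ch T w u ∧ G.Adj w p
          · have h1 : pstepR G T p c u p := by
              show rotP G T p c u = some p
              unfold rotP; rw [if_neg huc, if_neg hup, if_pos hchild, if_pos hcond]
            exact Relation.ReflTransGen.head h1
              (Relation.ReflTransGen.single (show rotP G T p c p = some c from rotP_p hpc))
          · have h1 : pstepR G T p c u c := by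
              show rotP G T p c u = some c
              unfold rotP; rw [if_neg huc, if_neg hup, if_pos hchild, if_neg hcond]
            exact Relation.ReflTransGen.single h1
        · refine Relation.ReflTransGen.head ?_ ih
          show rotP G T p c u = some u2
          rw [rotP_other hpc huc hup hchild]; exact hs

/-- Unchanged subtrees: strict ancestors of `p`. -/
lemma descR_eq_anc {v : V} (hpv : Ch T p v) (hvp : v ≠ p) (u : V) :
    ChR G T p c u v ↔ Ch T u v := by
  have hvc : v ≠ c := by
    rintro rfl; exact not_ch_p_c hpc hpv
  constructor
  · intro hu
    induction hu using Relation.ReflTransGen.head_induction_on with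
    | refl => exact Relation.ReflTransGen.refl
    | @head x u2 hs ht ih =>
      rcases pstepR_cases hs with ⟨rfl, hq⟩ | ⟨_, rfl, rfl⟩ | ⟨_, _, hch, _, rfl⟩ |
          ⟨_, _, hch, _, rfl⟩ | ⟨_, _, _, hstep⟩
      · exact ch_head hpc hpv
      · exact hpv
      · exact ch_head hch (ch_head hpc hpv)
      · exact ch_head hch (ch_head hpc hpv)
      · exact ch_head hstep ih
  · intro hu
    rcases Relation.ReflTransGen.cases_head hpv with rfl | ⟨q, hq, hqv⟩
    · exact absurd rfl hvp.symm
    · have hqp : ¬ Ch T q p := by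
        intro h
        have : q = p := ch_antisymm h (ch_single hq)
        subst this; exact not_pstep_self hq
      have hqc : ¬ Ch T q c := fun h => hqp (ch_tail h hpc)
      by_cases hup : Ch T u p
      · have h1 : ChR G T p c u c := chR_to_c hpc hup
        have h2 : pstepR G T p c c q := by
          show rotP G T p c c = some q
          rw [rotP_c hpc]; exact hq
        have h3 : ChR G T p c q v := by
          refine ch_fwd hqv (fun w hw hwv => ?_)
          by_cases hwvne : w = v
          · exact Or.inl hwvne
          · right
            have hwp : w ≠ p := fun e => hqp (e ▸ hw)
            have hwc : w ≠ c := fun e => hqc (e ▸ hw)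
            have hnwc : T.parent w ≠ some c := fun e => hqc (ch_tail hw e)
            exact rotP_other hpc hwc hwp hnwc
        exact Relation.ReflTransGen.trans h1 (Relation.ReflTransGen.head h2 h3)
      · refine ch_fwd hu (fun w hw hwv => ?_)
        by_cases hwvne : w = v
        · exact Or.inl hwvne
        · right
          have hwp : w ≠ p := fun e => hup (e ▸ hw)
          have hwc : w ≠ c := fun e => hup (ch_tail (e ▸ hw) hpc)
          have hnwc : T.parent w ≠ some c := fun e => hup (ch_tail (ch_tail hw e) hpc)
          exact rotP_other hpc hwc hwp hnwc

end RotSec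

section RotSec2

variable {G : SimpleGraph V} {T : RTree V} {p c : V} (hpc : T.parent c = some p)

include hpc

/-- The subtree of `c` after rotation is the old subtree of `p`. -/
lemma descR_c (u : V) : ChR G T p c u c ↔ Ch T u p := by
  constructor
  · intro h
    induction h using Relation.ReflTransGen.head_induction_on with
    | refl => exact ch_single hpc
    | @head x u2 hs ht ih =>
      rcases pstepR_cases hs with ⟨rfl, hq⟩ | ⟨_, rfl, rfl⟩ | ⟨_, _, hch, _, rfl⟩ |
          ⟨_, _, hch, _, rfl⟩ | ⟨_, _, _, hstep⟩
      · exact ch_single hpc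
      · exact Relation.ReflTransGen.refl
      · exact ch_head hch (ch_single hpc)
      · exact ch_head hch (ch_single hpc)
      · exact ch_head hstep ih
  · exact chR_to_c hpc

/-- The subtree of `p` after rotation. -/
lemma descR_p (u : V) : ChR G T p c u p ↔
    (u = p ∨ (∃ y, T.parent y = some p ∧ y ≠ c ∧ Ch T u y) ∨
      (∃ x, T.parent x = some c ∧ (∃ w, Ch T w x ∧ G.Adj w p) ∧ Ch T u x)) := by
  constructor
  · intro h
    induction h using Relation.ReflTransGen.head_induction_on with
    | refl => exact Or.inl rfl
    | @head x u2 hs ht ih =>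
      rcases pstepR_cases hs with ⟨rfl, hq⟩ | ⟨_, rfl, rfl⟩ | ⟨hxc, hxp, hch, hcond, rfl⟩ |
          ⟨hxc, hxp, hch, hcond, rfl⟩ | ⟨hxc, hxp, hnch, hstep⟩
      · -- x = c, T.parent p = some u2 : impossible
        exfalso
        rcases ih with rfl | ⟨y, hy, hyc, huy⟩ | ⟨x', hx', _, hux'⟩
        · exact not_pstep_self hq
        · have h1 : Ch T u2 p := ch_tail huy hy
          have : u2 = p := ch_antisymm h1 (ch_single hq)
          subst this; exact not_pstep_self hq
        · have h1 : Ch T u2 p := ch_tail (ch_tail hux' hx') hpc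
          have : u2 = p := ch_antisymm h1 (ch_single hq)
          subst this; exact not_pstep_self hq
      · exact Or.inl rfl
      · exact Or.inr (Or.inr ⟨x, hch, hcond, Relation.ReflTransGen.refl⟩)
      · -- kept child: ih is about c, impossible
        exfalso
        rcases ih with rfl | ⟨y, hy, hyc, hcy⟩ | ⟨x', hx', _, hcx'⟩
        · exact c_ne_p hpc rfl
        · rcases ch_c_elim hpc hcy with rfl | h2
          · exact hyc rfl
          · have : p = y := ch_antisymm h2 (ch_single hy)
            subst this; exact not_pstep_self hy
        · rcases ch_c_elim hpc hcx' with rfl | h2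
          · exact not_pstep_self hx'
          · exact not_ch_p_child hpc hx' h2
      · -- generic step
        rcases ih with rfl | ⟨y, hy, hyc, hy2⟩ | ⟨x', hx', hcond, hx2⟩
        · exact Or.inr (Or.inl ⟨x, hstep, hxc, Relation.ReflTransGen.refl⟩)
        · exact Or.inr (Or.inl ⟨y, hy, hyc, ch_head hstep hy2⟩)
        · exact Or.inr (Or.inr ⟨x', hx', hcond, ch_head hstep hx2⟩)
  · rintro (rfl | ⟨y, hy, hyc, huy⟩ | ⟨x, hx, hcond, hux⟩)
    · exact Relation.ReflTransGen.refl
    · have hyp : y ≠ p := by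
        rintro rfl; exact not_pstep_self hy
      have hPy : ¬ Ch T p y := by
        intro h
        have : p = y := ch_antisymm h (ch_single hy)
        exact hyp this.symm
      have h1 : ChR G T p c u y := by
        refine ch_fwd huy (fun w hw hwy => ?_)
        by_cases hwyne : w = y
        · exact Or.inl hwyne
        · right
          have hwp : w ≠ p := fun e => hPy (e ▸ hwy)
          have hwc : w ≠ c := by
            rintro rfl
            rcases ch_c_elim hpc hwy with rfl | h2
            · exact hwyne rfl
            · exact hPy h2
          have hnwc : T.parent w ≠ some c := by
            intro e
            rcases Relation.ReflTransGen.cases_head hwy with rfl | ⟨z, hz, hzy⟩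
            · exact hwyne rfl
            · have : z = c := pstep_det hz e
              subst this
              rcases ch_c_elim hpc hzy with rfl | h2
              · exact hyc rfl
              · exact hPy h2
          exact rotP_other hpc hwc hwp hnwc
      refine Relation.ReflTransGen.tail h1 ?_
      show rotP G T p c y = some p
      have hync : T.parent y ≠ some c := by
        intro e
        have : p = c := pstep_det hy e
        exact c_ne_p hpc this.symm
      rw [rotP_other hpc hyc hyp hync]; exact hy
    · have hxp : x ≠ p := by
        rintro rfl; exact not_ch_p_c hpc (ch_single hx)
      have hxc : x ≠ c := by
        rintro rfl; exact not_pstep_self hx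
      have hncx : ¬ Ch T c x := by
        intro h
        exact hxc (ch_antisymm (ch_single hx) h)
      have hnpx : ¬ Ch T p x := not_ch_p_child hpc hx
      have h1 : ChR G T p c u x := by
        refine ch_fwd hux (fun w hw hwx => ?_)
        by_cases hwxne : w = x
        · exact Or.inl hwxne
        · right
          have hwp : w ≠ p := fun e => hnpx (e ▸ hwx)
          have hwc : w ≠ c := fun e => hncx (e ▸ hwx)
          have hnwc : T.parent w ≠ some c := by
            intro e
            rcases Relation.ReflTransGen.cases_head hwx with rfl | ⟨z, hz, hzx⟩
            · exact hwxne rfl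
            · have : z = c := pstep_det hz e
              subst this
              exact hncx hzx
          exact rotP_other hpc hwc hwp hnwc
      refine Relation.ReflTransGen.tail h1 ?_
      show rotP G T p c x = some p
      unfold rotP; rw [if_neg hxc, if_neg hxp, if_pos hx, if_pos hcond]

end RotSec2


/- ===================== The rotated tree ===================== -/

section RotTree

variable {G : SimpleGraph V} {T : RTree V} {p c : V}

/-- The rotated tree. -/
noncomputable def rotT (G : SimpleGraph V) (T : RTree V) (p c : V)
    (hpc : T.parent c = some p) : RTree V where
  supp := T.supp
  parent := rotP G T p c
  parent_eq_none := by
    intro v hv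
    have hvc : v ≠ c := fun e => hv (e ▸ (T.mem_of_parent hpc).1)
    have hvp : v ≠ p := fun e => hv (e ▸ (T.mem_of_parent hpc).2)
    have hn : T.parent v = none := T.parent_eq_none v hv
    rw [rotP_other hpc hvc hvp (by rw [hn]; simp), hn]
  mem_of_parent := by
    intro v w h
    rcases pstepR_cases (show pstepR G T p c v w from h) with ⟨rfl, hq⟩ | ⟨_, rfl, rfl⟩ |
        ⟨_, _, hch, _, rfl⟩ | ⟨_, _, hch, _, rfl⟩ | ⟨_, _, _, hstep⟩
    · exact ⟨(T.mem_of_parent hpc).1, (T.mem_of_parent hq).2⟩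
    · exact ⟨(T.mem_of_parent hpc).2, (T.mem_of_parent hpc).1⟩
    · exact ⟨(T.mem_of_parent hch).1, (T.mem_of_parent hpc).2⟩
    · exact ⟨(T.mem_of_parent hch).1, (T.mem_of_parent hpc).1⟩
    · exact T.mem_of_parent hstep
  root_unique := by
    have key : ∀ x, rotP G T p c x = none →
        (x = c ∧ T.parent p = none) ∨ (x ≠ c ∧ x ≠ p ∧ T.parent x = none) := by
      intro x hxn
      unfold rotP at hxn
      split_ifs at hxn with h1 h2 h3 h4
      · exact Or.inl ⟨h1, hxn⟩
      · exact Or.inr ⟨h1, h2, hxn⟩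
    intro v hv w hw hvn hwn
    rcases key v hvn with ⟨rfl, hv2⟩ | ⟨hvc, hvp, hv2⟩
    · rcases key w hwn with ⟨rfl, _⟩ | ⟨hwc, hwp, hw2⟩
      · rfl
      · exact absurd (T.root_unique p (T.mem_of_parent hpc).2 w hw hv2 hw2) (Ne.symm hwp)
    · rcases key w hwn with ⟨rfl, hw2⟩ | ⟨hwc, hwp, hw2⟩
      · exact absurd (T.root_unique p (T.mem_of_parent hpc).2 v hv hw2 hv2) (Ne.symm hvp)
      · exact T.root_unique v hv w hw hv2 hw2
  reaches_root := by
    intro v hv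
    obtain ⟨r, hrs, hrn, hr⟩ := T.reaches_root v hv
    by_cases hq : T.parent p = none
    · refine ⟨c, (T.mem_of_parent hpc).1, by rw [rotP_c hpc]; exact hq, ?_⟩
      have hrp : r = p := T.root_unique r hrs p (T.mem_of_parent hpc).2 hrn hq
      exact chR_to_c hpc (hrp ▸ hr)
    · obtain ⟨q, hq'⟩ := Option.ne_none_iff_exists'.mp hq
      have hrc : r ≠ c := fun e => by rw [e, hpc] at hrn; cases hrn
      have hrp : r ≠ p := fun e => by rw [e, hq'] at hrn; cases hrn
      have hrch : T.parent r ≠ some c := by rw [hrn]; simp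
      refine ⟨r, hrs, by rw [rotP_other hpc hrc hrp hrch]; exact hrn, ?_⟩
      by_cases hvp : Ch T v p
      · have h1 : ChR G T p c v c := chR_to_c hpc hvp
        have h2 : pstepR G T p c c q := by
          show rotP G T p c c = some q
          rw [rotP_c hpc]; exact hq'
        have hqs : q ∈ T.supp := (T.mem_of_parent hq').2
        obtain ⟨r2, hr2s, hr2n, hr2⟩ := T.reaches_root q hqs
        have hrr : r2 = r := T.root_unique r2 hr2s r hrs hr2n hrn
        rw [hrr] at hr2
        have hqp : ¬ Ch T q p := by
          intro h
          have : q = p := ch_antisymm h (ch_single hq')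
          subst this; exact not_pstep_self hq'
        have h3 : ChR G T p c q r := by
          refine ch_fwd hr2 (fun w hw hwr => ?_)
          by_cases hwrne : w = r
          · exact Or.inl hwrne
          · right
            have hwp : w ≠ p := fun e => hqp (e ▸ hw)
            have hwc : w ≠ c := fun e => hqp (ch_tail (e ▸ hw) hpc)
            have hnwc : T.parent w ≠ some c := fun e => hqp (ch_tail (ch_tail hw e) hpc)
            exact rotP_other hpc hwc hwp hnwc
        exact Relation.ReflTransGen.trans h1 (Relation.ReflTransGen.head h2 h3)
      · refine ch_fwd hr (fun w hw hwr => ?_)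
        by_cases hwrne : w = r
        · exact Or.inl hwrne
        · right
          have hwp : w ≠ p := fun e => hvp (e ▸ hw)
          have hwc : w ≠ c := fun e => hvp (ch_tail (e ▸ hw) hpc)
          have hnwc : T.parent w ≠ some c := fun e => hvp (ch_tail (ch_tail hw e) hpc)
          exact rotP_other hpc hwc hwp hnwc

variable (hpc : T.parent c = some p)

lemma rotT_isRotationAt : IsRotationAt G T (rotT G T p c hpc) p c := by
  refine ⟨hpc, rfl, rotP_c hpc, rotP_p hpc, ?_, ?_⟩
  · intro x hxp hx
    have hxc : x ≠ c := by
      rintro rfl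
      exact c_ne_p hpc (pstep_det hx hpc)
    have hiff : (∃ u ∈ T.descSet x, G.Adj u p) ↔ (∃ u, Ch T u x ∧ G.Adj u p) := Iff.rfl
    constructor
    · intro hcond
      show rotP G T p c x = some p
      unfold rotP
      rw [if_neg hxc, if_neg hxp, if_pos hx, if_pos (hiff.mp hcond)]
    · intro hcond
      show rotP G T p c x = some c
      unfold rotP
      rw [if_neg hxc, if_neg hxp, if_pos hx, if_neg (fun h => hcond (hiff.mpr h))]
  · intro x hxc hxp hxch
    exact rotP_other hpc hxc hxp hxch

lemma rotT_descSet_ne {v : V} (hvc : v ≠ c) (hvp : v ≠ p) :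
    (rotT G T p c hpc).descSet v = T.descSet v := by
  ext u
  show ChR G T p c u v ↔ Ch T u v
  by_cases hp : Ch T p v
  · exact descR_eq_anc hpc hp hvp u
  · exact descR_eq_main hpc hvc hvp hp u

lemma rotT_descSet_c : (rotT G T p c hpc).descSet c = T.descSet p := by
  ext u
  exact descR_c hpc u

/-- On a walk from a `P`-vertex to a non-`P`-vertex there is a crossing edge. -/
lemma walk_crossing {W : Type} {H : SimpleGraph W} (P : W → Prop) {a b : W}
    (wk : H.Walk a b) (ha : P a) (hb : ¬ P b) :
    ∃ x y, H.Adj x y ∧ P x ∧ ¬ P y := by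
  induction wk with
  | nil => exact absurd ha hb
  | cons h q ih =>
    rename_i s t u
    by_cases ht : P t
    · exact ih ht hb
    · exact ⟨s, t, h, ha, ht⟩

omit hpc in
/-- In a search tree, every subtree hanging below `w` contains a neighbour of `w`. -/
lemma child_nbr {U : Finset V} (hstg : IsSTGOn G U T) {y w : V}
    (hy : T.parent y = some w) : ∃ z, Ch T z y ∧ G.Adj z w := by
  have hys : y ∈ U := hstg.1 ▸ (T.mem_of_parent hy).1
  have hws : w ∈ U := hstg.1 ▸ (T.mem_of_parent hy).2
  have hconn := hstg.2.1 w hws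
  have hyd : y ∈ T.descSet w := ch_single hy
  have hwd : w ∈ T.descSet w := Relation.ReflTransGen.refl
  obtain ⟨wk⟩ := hconn.preconnected ⟨y, hyd⟩ ⟨w, hwd⟩
  have hnwy : ¬ Ch T w y := by
    intro h
    have : w = y := ch_antisymm h (ch_single hy)
    subst this; exact not_pstep_self hy
  obtain ⟨x, z, hadj, hPx, hPz⟩ :=
    walk_crossing (fun s : T.descSet w => Ch T s.val y) wk Relation.ReflTransGen.refl hnwy
  have hadj : G.Adj x.val z.val ∧ x.val ∈ (U : Set V) ∧ z.val ∈ (U : Set V) := hadj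
  have hGxz : G.Adj x.val z.val := hadj.1
  -- comparability
  have hxU : x.val ∈ U := hadj.2.1
  have hzU : z.val ∈ U := hadj.2.2
  rcases hstg.2.2 x.val z.val hxU hzU hGxz with hxz | hzx
  · -- x ancestor of z : Ch z x
    exact absurd (Relation.ReflTransGen.trans hxz hPx) hPz
  · -- z ancestor of x : Ch x z
    rcases ch_total hPx (show Ch T x.val z.val from hzx) with h1 | h2
    · -- Ch y z
      rcases Relation.ReflTransGen.cases_head h1 with he | ⟨zz, hzz, hzz2⟩
      · exact absurd (show Ch T z.val y by rw [← he]; exact Relation.ReflTransGen.refl) hPz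
      · have hzzw : zz = w := pstep_det hzz hy
        rw [hzzw] at hzz2
        have hzw : z.val = w := ch_antisymm (show Ch T z.val w from z.2) hzz2
        exact ⟨x.val, hPx, Eq.mp (congrArg (G.Adj x.val) hzw) hGxz⟩
    · exact absurd h2 hPz

omit hpc in
lemma reachable_to (H : SimpleGraph V) {D S : Set V} (hS : S ⊆ D)
    (hconn : (H.induce S).Connected) {z w : V} (hz : z ∈ S) (hw : w ∈ S) :
    (H.induce D).Reachable ⟨z, hS hz⟩ ⟨w, hS hw⟩ := by
  have := hconn.preconnected ⟨z, hz⟩ ⟨w, hw⟩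
  have hmap := this.map (H.induceHomOfLE hS).toHom
  exact hmap

/-- Rotation preserves the search-tree property. -/
lemma rotT_STG {U : Finset V} (hstg : IsSTGOn G U T) :
    IsSTGOn G U (rotT G T p c hpc) := by
  have hcU : c ∈ U := hstg.1 ▸ (T.mem_of_parent hpc).1
  have hpU : p ∈ U := hstg.1 ▸ (T.mem_of_parent hpc).2
  have memU : ∀ {a b : V}, Ch T a b → b ∈ U → a ∈ U := by
    intro a b hab hb
    by_cases he : a = b
    · exact he ▸ hb
    · exact hstg.1 ▸ (mem_supp_of_ch hab he).1
  refine ⟨hstg.1, ?_, ?_⟩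
  · intro v hv
    by_cases hvc : v = c
    · subst hvc
      rw [rotT_descSet_c hpc]
      exact hstg.2.1 p hpU
    · by_cases hvp : v = p
      · rw [hvp]
        set H := restrictG G (↑U : Set V) with hH
        set D := (rotT G T p c hpc).descSet p with hD
        have hpD : p ∈ D := Relation.ReflTransGen.refl
        have key : ∀ z (hz : z ∈ D), (H.induce D).Reachable ⟨z, hz⟩ ⟨p, hpD⟩ := by
          intro z hz
          rcases (descR_p hpc z).mp (show ChR G T p c z p from hz) with
            rfl | ⟨y, hy, hyc, hzy⟩ | ⟨x, hx, hcond, hzx⟩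
          · exact SimpleGraph.Reachable.refl _
          · have hyU : y ∈ U := hstg.1 ▸ (T.mem_of_parent hy).1
            have hsub : T.descSet y ⊆ D := fun u hu =>
              show ChR G T p c u p from
                (descR_p hpc u).mpr (Or.inr (Or.inl ⟨y, hy, hyc, hu⟩))
            obtain ⟨w, hwy, hwadj⟩ := child_nbr hstg hy
            have hwU : w ∈ U := memU (ch_single hy) hpU |> fun _ => memU hwy hyU
            refine (reachable_to H hsub (hstg.2.1 y hyU) hzy hwy).trans (SimpleGraph.Adj.reachable ?_)
            exact show G.Adj w p ∧ w ∈ (U : Set V) ∧ p ∈ (U : Set V) from ⟨hwadj, hwU, hpU⟩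
          · have hxU : x ∈ U := hstg.1 ▸ (T.mem_of_parent hx).1
            have hsub : T.descSet x ⊆ D := fun u hu =>
              show ChR G T p c u p from
                (descR_p hpc u).mpr (Or.inr (Or.inr ⟨x, hx, hcond, hu⟩))
            obtain ⟨w, hwx, hwadj⟩ := hcond
            have hwU : w ∈ U := memU hwx hxU
            refine (reachable_to H hsub (hstg.2.1 x hxU) hzx hwx).trans (SimpleGraph.Adj.reachable ?_)
            exact show G.Adj w p ∧ w ∈ (U : Set V) ∧ p ∈ (U : Set V) from ⟨hwadj, hwU, hpU⟩
        haveI : Nonempty (↑D) := ⟨⟨p, hpD⟩⟩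
        exact ⟨fun a b => (key a.val a.2).trans (key b.val b.2).symm⟩
      · rw [rotT_descSet_ne hpc hvc hvp]
        exact hstg.2.1 v hv
  · have comp_one : ∀ u v : V, u ∈ U → v ∈ U → G.Adj u v → Ch T v u →
        ((rotT G T p c hpc).Anc u v ∨ (rotT G T p c hpc).Anc v u) := by
      intro u v hu hv hadj h
      by_cases huc : u = c
      · subst huc
        left
        exact (descR_c hpc v).mpr (ch_tail h hpc)
      · by_cases hup : u = p
        · rw [hup] at hadj h ⊢
          by_cases hvc : v = c
          · rw [hvc]
            right
            exact Relation.ReflTransGen.single (show rotP G T p c p = some c from rotP_p hpc)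
          · left
            have hvp : v ≠ p := fun e => (G.loopless.irrefl p (e ▸ hadj))
            obtain ⟨y, hy, hvy⟩ := ch_to_child h hvp
            by_cases hyc : y = c
            · subst hyc
              obtain ⟨x, hxch, hvx⟩ := ch_to_child hvy hvc
              exact (descR_p hpc v).mpr
                (Or.inr (Or.inr ⟨x, hxch, ⟨v, hvx, hadj.symm⟩, hvx⟩))
            · exact (descR_p hpc v).mpr (Or.inr (Or.inl ⟨y, hy, hyc, hvy⟩))
        · left
          have hv2 : v ∈ (rotT G T p c hpc).descSet u := by
            rw [rotT_descSet_ne hpc huc hup]; exact h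
          exact hv2
    intro u v hu hv hadj
    rcases hstg.2.2 u v hu hv hadj with h | h
    · exact comp_one u v hu hv hadj h
    · exact (comp_one v u hv hu hadj.symm h).symm

end RotTree


/- ===================== Step 1 : moving a vertex to the root ===================== -/

section Step1

variable {G : SimpleGraph V} {T : RTree V} {p c : V}

lemma chR_from_c_sub (hpc : T.parent c = some p) {a : V}
    (h : ChR G T p c c a) : a = c ∨ Ch T p a := by
  induction h with
  | refl => exact Or.inl rfl
  | tail hcb hba ih =>
    rename_i b a'
    rcases pstepR_cases hba with ⟨rfl, hq⟩ | ⟨_, rfl, rfl⟩ | ⟨hbc, hbp, hch, _, rfl⟩ |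
        ⟨hbc, hbp, hch, _, rfl⟩ | ⟨hbc, hbp, hnch, hstep⟩
    · exact Or.inr (ch_single hq)
    · exact Or.inl rfl
    · exact Or.inr Relation.ReflTransGen.refl
    · exact Or.inl rfl
    · rcases ih with rfl | hpb
      · exact absurd rfl hbc
      · exact Or.inr (ch_tail hpb hstep)

lemma not_chR_c_p (hpc : T.parent c = some p) : ¬ ChR G T p c c p := by
  intro h
  rcases (descR_p hpc c).mp h with he | ⟨y, hy, hyc, hcy⟩ | ⟨x, hx, _, hcx⟩
  · exact c_ne_p hpc he
  · rcases ch_c_elim hpc hcy with rfl | h2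
    · exact hyc rfl
    · have : p = y := ch_antisymm h2 (ch_single hy)
      subst this; exact not_pstep_self hy
  · rcases ch_c_elim hpc hcx with rfl | h2
    · exact not_pstep_self hx
    · exact not_ch_p_child hpc hx h2

lemma anc_set_decrease [Fintype V] (hpc : T.parent c = some p) :
    Set.ncard {a | Ch (rotT G T p c hpc) c a} < Set.ncard {a | Ch T c a} := by
  apply Set.ncard_lt_ncard
  · constructor
    · intro a ha
      rcases chR_from_c_sub hpc (show ChR G T p c c a from ha) with rfl | h2
      · exact Relation.ReflTransGen.refl
      · exact ch_head hpc h2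
    · intro hsub
      exact not_chR_c_p hpc (hsub (ch_single hpc))
  · exact Set.toFinite _

lemma step_to_root [Fintype V] {U : Finset V} {r : V} :
    ∀ (n : ℕ) (T1 : RTree V), IsSTGOn G U T1 → Set.ncard {a | Ch T1 r a} ≤ n →
    ∃ k T1', ReachesIn G k T1 T1' ∧ IsSTGOn G U T1' ∧ T1'.parent r = none := by
  intro n
  induction n with
  | zero =>
    intro T1 hstg hcard
    have : 0 < Set.ncard {a | Ch T1 r a} :=
      (Set.ncard_pos (Set.toFinite _)).mpr ⟨r, Relation.ReflTransGen.refl⟩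
    omega
  | succ n ih =>
    intro T1 hstg hcard
    cases hpr : T1.parent r with
    | none => exact ⟨0, T1, rfl, hstg, hpr⟩
    | some p =>
      have hdec := anc_set_decrease (G := G) hpr
      obtain ⟨k, T1', h1, h2, h3⟩ := ih (rotT G T1 p r hpr) (rotT_STG hpr hstg) (by omega)
      exact ⟨k + 1, T1', ⟨rotT G T1 p r hpr, ⟨p, r, rotT_isRotationAt hpr⟩, h1⟩, h2, h3⟩

lemma reaches_trans {k l : ℕ} {T1 T2 T3 : RTree V} (h1 : ReachesIn G k T1 T2)
    (h2 : ReachesIn G l T2 T3) : ∃ m, ReachesIn G m T1 T3 := by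
  induction k generalizing T1 with
  | zero =>
    cases h1; exact ⟨l, h2⟩
  | succ k ih =>
    obtain ⟨T', hrot, hrest⟩ := h1
    obtain ⟨m, hm⟩ := ih hrest
    exact ⟨m + 1, T', hrot, hm⟩

/-- Two search trees on the empty support set are equal. -/
lemma stg_empty_eq {T1 T2 : RTree V} (h1 : T1.supp = ∅) (h2 : T2.supp = ∅) : T1 = T2 := by
  refine rtree_ext (h1.trans h2.symm) (funext fun v => ?_)
  rw [T1.parent_eq_none v (by rw [h1]; exact Finset.notMem_empty v),
    T2.parent_eq_none v (by rw [h2]; exact Finset.notMem_empty v)]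

end Step1


/- ===================== Restriction of a tree to a subtree ===================== -/

open Classical in
noncomputable def restrictP (T : RTree V) (C : Finset V) : V → Option V := fun v =>
  if v ∈ C then
    (match T.parent v with
      | some w => if w ∈ C then some w else none
      | none => none)
  else none

section Restrict

variable {G : SimpleGraph V} {T : RTree V} {c0 : V} {C : Finset V}

lemma restrictP_spec (v w : V) :
    restrictP T C v = some w ↔ (v ∈ C ∧ w ∈ C ∧ T.parent v = some w) := by
  unfold restrictP
  split_ifs with h1
  · cases hv : T.parent v with
    | none => simp [hv]
    | some z =>
      simp only [hv]
      split_ifs with h2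
      · constructor
        · intro he
          exact ⟨h1, (Option.some.inj he) ▸ h2, (Option.some.inj he) ▸ rfl⟩
        · rintro ⟨_, _, he⟩
          rw [Option.some.inj he]
      · constructor
        · intro he; cases he
        · rintro ⟨_, hw, he⟩
          exact absurd ((Option.some.inj he) ▸ hw) h2
  · simp [h1]

variable (hC : (↑C : Set V) = T.descSet c0)

include hC

lemma memC_iff (v : V) : v ∈ C ↔ Ch T v c0 := by
  constructor
  · intro h
    exact (show v ∈ T.descSet c0 from hC ▸ (Finset.mem_coe.mpr h))
  · intro h
    exact Finset.mem_coe.mp (hC ▸ (show v ∈ T.descSet c0 from h))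

lemma restrict_ch {R : RTree V} (hR : R.parent = restrictP T C) {v a : V} (ha : a ∈ C) :
    Ch R v a ↔ Ch T v a := by
  constructor
  · intro h
    induction h using Relation.ReflTransGen.head_induction_on with
    | refl => exact Relation.ReflTransGen.refl
    | @head u w hs ht ih =>
      have hs' : restrictP T C u = some w := by rw [← hR]; exact hs
      exact ch_head ((restrictP_spec u w).mp hs').2.2 ih
  · intro h
    induction h using Relation.ReflTransGen.head_induction_on with
    | refl => exact Relation.ReflTransGen.refl
    | @head u w hs ht ih =>
      have huC : u ∈ C := (memC_iff hC u).mpr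
        (Relation.ReflTransGen.trans (ch_head hs ht) ((memC_iff hC a).mp ha))
      have hwC : w ∈ C := (memC_iff hC w).mpr
        (Relation.ReflTransGen.trans ht ((memC_iff hC a).mp ha))
      refine ch_head (show R.parent u = some w from ?_) ih
      rw [hR]
      exact (restrictP_spec u w).mpr ⟨huC, hwC, hs⟩

lemma restrict_descSet {R : RTree V} (hR : R.parent = restrictP T C) {a : V} (ha : a ∈ C) :
    R.descSet a = T.descSet a := by
  ext u
  exact restrict_ch hC hR ha

omit hC in
lemma restrict_exists (T : RTree V) (C : Finset V) (hC : (↑C : Set V) = T.descSet c0)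
    (hc0 : c0 ∈ T.supp) :
    ∃ R : RTree V, R.supp = C ∧ R.parent = restrictP T C := by
  have hCs : ∀ v ∈ C, v ∈ T.supp := by
    intro v hv
    have h := (memC_iff hC v).mp hv
    by_cases he : v = c0
    · exact he ▸ hc0
    · exact (mem_supp_of_ch h he).1
  have hc0C : c0 ∈ C := (memC_iff hC c0).mpr Relation.ReflTransGen.refl
  have hrootn : restrictP T C c0 = none := by
    unfold restrictP
    rw [if_pos hc0C]
    cases hp : T.parent c0 with
    | none => simp
    | some w =>
      simp only
      rw [if_neg]
      intro hwC
      have : w = c0 := ch_antisymm ((memC_iff hC w).mp hwC) (ch_single hp)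
      subst this
      exact not_pstep_self hp
  have hnone_c0 : ∀ v ∈ C, restrictP T C v = none → v = c0 := by
    intro v hv hn
    by_contra hne
    obtain ⟨z, hz, hzc⟩ := Relation.ReflTransGen.cases_head ((memC_iff hC v).mp hv) |>.resolve_left hne
    have hzC : z ∈ C := (memC_iff hC z).mpr hzc
    rw [(restrictP_spec v z).mpr ⟨hv, hzC, hz⟩] at hn
    cases hn
  refine ⟨⟨C, restrictP T C, ?_, ?_, ?_, ?_⟩, rfl, rfl⟩
  · intro v hv
    unfold restrictP
    rw [if_neg hv]
  · intro v w h
    have := (restrictP_spec v w).mp h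
    exact ⟨this.1, this.2.1⟩
  · intro v hv w hw hvn hwn
    rw [hnone_c0 v hv hvn, hnone_c0 w hw hwn]
  · intro v hv
    refine ⟨c0, hc0C, hrootn, ?_⟩
    have h := (memC_iff hC v).mp hv
    induction h using Relation.ReflTransGen.head_induction_on with
    | refl => exact Relation.ReflTransGen.refl
    | @head u w hs ht ih =>
      have huC : u ∈ C := (memC_iff hC u).mpr (ch_head hs ht)
      have hwC : w ∈ C := (memC_iff hC w).mpr ht
      exact Relation.ReflTransGen.head
        ((restrictP_spec u w).mpr ⟨huC, hwC, hs⟩) (ih hwC)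

omit hC in
lemma restrict_STG {U : Finset V} {R : RTree V} (hstg : IsSTGOn G U T)
    (hC : (↑C : Set V) = T.descSet c0) (hc0 : c0 ∈ U)
    (hRs : R.supp = C) (hRp : R.parent = restrictP T C) : IsSTGOn G C R := by
  have hCU : ∀ v ∈ C, v ∈ U := by
    intro v hv
    have h := (memC_iff hC v).mp hv
    by_cases he : v = c0
    · exact he ▸ hc0
    · exact hstg.1 ▸ (mem_supp_of_ch h he).1
  refine ⟨hRs, ?_, ?_⟩
  · intro a ha
    rw [restrict_descSet hC hRp ha]
    have hgeq : (restrictG G (↑C : Set V)).induce (T.descSet a) =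
        (restrictG G (↑U : Set V)).induce (T.descSet a) := by
      ext x y
      show (G.Adj x.val y.val ∧ x.val ∈ (C : Set V) ∧ y.val ∈ (C : Set V)) ↔ (G.Adj x.val y.val ∧ x.val ∈ (U : Set V) ∧ y.val ∈ (U : Set V))
      have hx : x.val ∈ C := (memC_iff hC x.val).mpr
        (Relation.ReflTransGen.trans x.2 ((memC_iff hC a).mp ha))
      have hy : y.val ∈ C := (memC_iff hC y.val).mpr
        (Relation.ReflTransGen.trans y.2 ((memC_iff hC a).mp ha))
      constructor
      · rintro ⟨h1, _, _⟩
        exact ⟨h1, Finset.mem_coe.mpr (hCU _ hx), Finset.mem_coe.mpr (hCU _ hy)⟩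
      · rintro ⟨h1, _, _⟩
        exact ⟨h1, Finset.mem_coe.mpr hx, Finset.mem_coe.mpr hy⟩
    rw [hgeq]
    exact hstg.2.1 a (hCU a ha)
  · intro u v hu hv hadj
    rcases hstg.2.2 u v (hCU u hu) (hCU v hv) hadj with h | h
    · exact Or.inl ((restrict_ch hC hRp hu).mpr h)
    · exact Or.inr ((restrict_ch hC hRp hv).mpr h)

end Restrict

/- ===================== Matching subtrees of a common root ===================== -/

section Part

variable {G : SimpleGraph V} {U : Finset V}

lemma walk_preserve {W : Type} {H : SimpleGraph W} (P : W → Prop)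
    (hP : ∀ x y, P x → H.Adj x y → P y) {a b : W} (wk : H.Walk a b) (ha : P a) : P b := by
  induction wk with
  | nil => exact ha
  | cons h q ih => exact ih (hP _ _ ha h)

lemma subtree_subset {Ta Tb : RTree V} (ha : IsSTGOn G U Ta) (hb : IsSTGOn G U Tb)
    {r ca cb v : V} (hra : Ta.parent r = none) (hrb : Tb.parent r = none)
    (hca : Ta.parent ca = some r) (hcb : Tb.parent cb = some r)
    (hv1 : v ∈ Ta.descSet ca) (hv2 : v ∈ Tb.descSet cb) :
    Ta.descSet ca ⊆ Tb.descSet cb := by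
  have hrnotin : r ∉ Ta.descSet ca := by
    intro h
    have : r = ca := ch_of_none hra h
    subst this
    rw [hca] at hra; cases hra
  have hclosed : ∀ a b : V, a ∈ Tb.descSet cb → G.Adj a b → b ∈ U →
      b = r ∨ b ∈ Tb.descSet cb := by
    intro a b haD hadj hbU
    have haU : a ∈ U := by
      by_cases he : a = cb
      · exact hb.1 ▸ (he ▸ (Tb.mem_of_parent hcb).1)
      · exact hb.1 ▸ (mem_supp_of_ch haD he).1
    rcases hb.2.2 a b haU hbU hadj with h | h
    · exact Or.inr (Relation.ReflTransGen.trans h haD)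
    · rcases ch_total (show Ch Tb a b from h) (show Ch Tb a cb from haD) with h1 | h2
      · exact Or.inr h1
      · rcases Relation.ReflTransGen.cases_head h2 with he | ⟨z, hz, hzc⟩
        · exact Or.inr (he ▸ Relation.ReflTransGen.refl)
        · have : z = r := pstep_det hz hcb
          subst this
          exact Or.inl (ch_of_none hrb hzc).symm
  intro u hu
  have hcaU : ca ∈ U := ha.1 ▸ (Ta.mem_of_parent hca).1
  obtain ⟨wk⟩ := (ha.2.1 ca hcaU).preconnected ⟨v, hv1⟩ ⟨u, hu⟩
  exact walk_preserve (fun z : (Ta.descSet ca) => z.val ∈ Tb.descSet cb)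
    (fun s t hs hadj => by
      have hadj : G.Adj s.val t.val ∧ s.val ∈ (U : Set V) ∧ t.val ∈ (U : Set V) := hadj
      rcases hclosed s.val t.val hs hadj.1 hadj.2.2 with he | h
      · exact absurd (he ▸ t.2) hrnotin
      · exact h) wk hv2

lemma subtree_eq {Ta Tb : RTree V} (ha : IsSTGOn G U Ta) (hb : IsSTGOn G U Tb)
    {r ca cb v : V} (hra : Ta.parent r = none) (hrb : Tb.parent r = none)
    (hca : Ta.parent ca = some r) (hcb : Tb.parent cb = some r)
    (hv1 : v ∈ Ta.descSet ca) (hv2 : v ∈ Tb.descSet cb) :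
    Ta.descSet ca = Tb.descSet cb :=
  Set.Subset.antisymm (subtree_subset ha hb hra hrb hca hcb hv1 hv2)
    (subtree_subset hb ha hrb hra hcb hca hv2 hv1)

end Part


/- ===================== Mixing two trees along root subtrees ===================== -/

open Classical in
noncomputable def mixP (T1 T2 : RTree V) (S : Finset V) : V → Option V := fun v =>
  if ∃ y ∈ S, Ch T2 v y then T2.parent v else T1.parent v

section Mix

variable {T1 T2 : RTree V} {S : Finset V} {r : V}

lemma mixP_pos {v : V} (h : ∃ y ∈ S, Ch T2 v y) : mixP T1 T2 S v = T2.parent v := by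
  unfold mixP; rw [if_pos h]

lemma mixP_neg {v : V} (h : ¬ ∃ y ∈ S, Ch T2 v y) : mixP T1 T2 S v = T1.parent v := by
  unfold mixP; rw [if_neg h]

lemma mix_exists (hsupp : T1.supp = T2.supp) (h1r : T1.parent r = none)
    (h2r : T2.parent r = none) (hrs : r ∈ T1.supp)
    (hSch : ∀ y ∈ S, T2.parent y = some r)
    (hcl1 : ∀ v w : V, (∃ y ∈ S, Ch T2 w y) → T1.parent v = some w →
      ∃ y ∈ S, Ch T2 v y) :
    ∃ M : RTree V, M.supp = T1.supp ∧ M.parent = mixP T1 T2 S := by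
  have hbig_mem : ∀ v : V, (∃ y ∈ S, Ch T2 v y) → v ∈ T1.supp := by
    rintro v ⟨y, hyS, hvy⟩
    rw [hsupp]
    by_cases he : v = y
    · exact he ▸ (T2.mem_of_parent (hSch y hyS)).1
    · exact (mem_supp_of_ch hvy he).1
  have hrnb : ¬ ∃ y ∈ S, Ch T2 r y := by
    rintro ⟨y, hyS, hry⟩
    have : r = y := ch_of_none h2r hry
    subst this
    rw [hSch r hyS] at h2r; cases h2r
  refine ⟨⟨T1.supp, mixP T1 T2 S, ?_, ?_, ?_, ?_⟩, rfl, rfl⟩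
  · intro v hv
    rw [mixP_neg (fun h => hv (hbig_mem v h))]
    exact T1.parent_eq_none v hv
  · intro v w h
    by_cases hb : ∃ y ∈ S, Ch T2 v y
    · rw [mixP_pos hb] at h
      have := T2.mem_of_parent h
      exact ⟨hbig_mem v hb, hsupp ▸ this.2⟩
    · rw [mixP_neg hb] at h
      exact T1.mem_of_parent h
  · have hnone : ∀ v, v ∈ T1.supp → mixP T1 T2 S v = none → v = r := by
      intro v hv hn
      by_cases hb : ∃ y ∈ S, Ch T2 v y
      · rw [mixP_pos hb] at hn
        have : v = r := T2.root_unique v (hsupp ▸ hv) r (hsupp ▸ hrs) hn h2r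
        exact this
      · rw [mixP_neg hb] at hn
        exact T1.root_unique v hv r hrs hn h1r
    intro v hv w hw hvn hwn
    rw [hnone v hv hvn, hnone w hw hwn]
  · intro v hv
    refine ⟨r, hrs, by rw [mixP_neg hrnb]; exact h1r, ?_⟩
    by_cases hb : ∃ y ∈ S, Ch T2 v y
    · obtain ⟨y, hyS, hvy⟩ := hb
      have chainA : Relation.ReflTransGen (fun a b => mixP T1 T2 S a = some b) v y := by
        induction hvy using Relation.ReflTransGen.head_induction_on with
        | refl => exact Relation.ReflTransGen.refl
        | @head u w hs ht ih =>
          refine Relation.ReflTransGen.head ?_ (ih (hbig_mem w ⟨y, hyS, ht⟩))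
          rw [mixP_pos ⟨y, hyS, ch_head hs ht⟩]
          exact hs
      refine Relation.ReflTransGen.tail chainA ?_
      rw [mixP_pos ⟨y, hyS, Relation.ReflTransGen.refl⟩]
      exact hSch y hyS
    · obtain ⟨r1, hr1s, hr1n, hch⟩ := T1.reaches_root v hv
      have : r1 = r := T1.root_unique r1 hr1s r hrs hr1n h1r
      rw [this] at hch
      clear hv
      induction hch using Relation.ReflTransGen.head_induction_on with
      | refl => exact Relation.ReflTransGen.refl
      | @head u w hs ht ih =>
        have hwb : ¬ ∃ y ∈ S, Ch T2 w y := fun hcw => hb (hcl1 u w hcw hs)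
        exact Relation.ReflTransGen.head (by rw [mixP_neg hb]; exact hs) (ih hwb)

end Mix

/- ===================== Grafting a subtree ===================== -/

open Classical in
noncomputable def graftP (T S : RTree V) (C : Finset V) (r : V) : V → Option V := fun v =>
  if v ∈ C then
    (match S.parent v with
      | some w => some w
      | none => some r)
  else T.parent v

section Graft

variable {G : SimpleGraph V} {T S : RTree V} {C : Finset V} {r : V}

lemma graftP_spec (v w : V) : graftP T S C r v = some w ↔
    ((v ∈ C ∧ S.parent v = some w) ∨ (v ∈ C ∧ S.parent v = none ∧ w = r) ∨
      (v ∉ C ∧ T.parent v = some w)) := by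
  unfold graftP
  split_ifs with h1
  · cases hp : S.parent v with
    | some z => simp [h1, hp, eq_comm]
    | none => simp [h1, hp, eq_comm]
  · simp [h1]

lemma graftP_mem_ne_none {v : V} (hv : v ∈ C) : graftP T S C r v ≠ none := by
  unfold graftP
  rw [if_pos hv]
  cases hp : S.parent v <;> simp [hp]

variable (hS : S.supp = C) (hCsub : ∀ v ∈ C, v ∈ T.supp) (hrs : r ∈ T.supp)
  (hrn : T.parent r = none) (hrC : r ∉ C)
  (hcl : ∀ v w : V, T.parent v = some w → w ∈ C → v ∈ C)

include hS hCsub hrs hrn hrC hcl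

lemma graft_exists : ∃ Gr : RTree V, Gr.supp = T.supp ∧ Gr.parent = graftP T S C r := by
  refine ⟨⟨T.supp, graftP T S C r, ?_, ?_, ?_, ?_⟩, rfl, rfl⟩
  · intro v hv
    have hvC : v ∉ C := fun h => hv (hCsub v h)
    unfold graftP
    rw [if_neg hvC]
    exact T.parent_eq_none v hv
  · intro v w h
    rcases (graftP_spec v w).mp h with ⟨hvC, hp⟩ | ⟨hvC, _, rfl⟩ | ⟨hvC, hp⟩
    · exact ⟨hCsub v hvC, hCsub w (hS ▸ (S.mem_of_parent hp).2)⟩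
    · exact ⟨hCsub v hvC, hrs⟩
    · exact T.mem_of_parent hp
  · intro v hv w hw hvn hwn
    have hvC : v ∉ C := fun h => graftP_mem_ne_none h hvn
    have hwC : w ∉ C := fun h => graftP_mem_ne_none h hwn
    refine T.root_unique v hv w hw ?_ ?_
    · rw [← hvn]; unfold graftP; rw [if_neg hvC]
    · rw [← hwn]; unfold graftP; rw [if_neg hwC]
  · intro v hv
    have hrnone : graftP T S C r r = none := by
      unfold graftP; rw [if_neg hrC]; exact hrn
    refine ⟨r, hrs, hrnone, ?_⟩
    by_cases hvC : v ∈ C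
    · obtain ⟨s0, hs0, hs0n, hch⟩ := S.reaches_root v (hS ▸ hvC)
      have lift : Relation.ReflTransGen (fun a b => graftP T S C r a = some b) v s0 := by
        induction hch using Relation.ReflTransGen.head_induction_on with
        | refl => exact Relation.ReflTransGen.refl
        | @head u w hs2 ht ih =>
          have hwC : w ∈ C := hS ▸ (S.mem_of_parent hs2).2
          refine Relation.ReflTransGen.head ?_ (ih (hCsub w hwC) hwC)
          exact (graftP_spec u w).mpr (Or.inl ⟨hS ▸ (S.mem_of_parent hs2).1, hs2⟩)
      refine Relation.ReflTransGen.tail lift ?_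
      exact (graftP_spec s0 r).mpr (Or.inr (Or.inl ⟨hS ▸ hs0, hs0n, rfl⟩))
    · obtain ⟨r1, hr1s, hr1n, hch⟩ := T.reaches_root v hv
      have : r1 = r := T.root_unique r1 hr1s r hrs hr1n hrn
      rw [this] at hch
      clear hv
      induction hch using Relation.ReflTransGen.head_induction_on with
      | refl => exact Relation.ReflTransGen.refl
      | @head u w hs2 ht ih =>
        have hwC : w ∉ C := fun h => hvC (hcl u w hs2 h)
        refine Relation.ReflTransGen.head ?_ (ih hwC)
        exact (graftP_spec u w).mpr (Or.inr (Or.inr ⟨hvC, hs2⟩))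

lemma graft_descSet {Gr : RTree V} (hGr : Gr.parent = graftP T S C r) {x : V} (hx : x ∈ C) :
    Gr.descSet x = S.descSet x := by
  ext u
  show Ch Gr u x ↔ Ch S u x
  constructor
  · intro h
    induction h using Relation.ReflTransGen.head_induction_on with
    | refl => exact Relation.ReflTransGen.refl
    | @head a w hs2 ht ih =>
      have hs3 : graftP T S C r a = some w := by rw [← hGr]; exact hs2
      rcases (graftP_spec a w).mp hs3 with ⟨haC, hp⟩ | ⟨haC, hpn, he⟩ | ⟨haC, hp⟩
      · exact ch_head hp ih
      · exfalso
        rw [he] at ih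
        by_cases he2 : r = x
        · exact hrC (he2 ▸ hx)
        · exact hrC (hS ▸ (mem_supp_of_ch ih he2).1)
      · exfalso
        have hwC : w ∈ C := by
          by_cases he : w = x
          · exact he ▸ hx
          · exact hS ▸ (mem_supp_of_ch ih he).1
        exact haC (hcl a w hp hwC)
  · intro h
    induction h using Relation.ReflTransGen.head_induction_on with
    | refl => exact Relation.ReflTransGen.refl
    | @head a w hs2 ht ih =>
      refine ch_head (show Gr.parent a = some w from ?_) ih
      rw [hGr]
      exact (graftP_spec a w).mpr (Or.inl ⟨hS ▸ (S.mem_of_parent hs2).1, hs2⟩)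

lemma graft_rot {Sb Ga Gb : RTree V} {p' c' : V}
    (hGas : Ga.supp = T.supp) (hGap : Ga.parent = graftP T S C r)
    (hGbs : Gb.supp = T.supp) (hGbp : Gb.parent = graftP T Sb C r)
    (hrot : IsRotationAt G S Sb p' c') : IsRotationAt G Ga Gb p' c' := by
  obtain ⟨h1, h2, h3, h4, h5, h6⟩ := hrot
  have hc'C : c' ∈ C := hS ▸ (S.mem_of_parent h1).1
  have hp'C : p' ∈ C := hS ▸ (S.mem_of_parent h1).2
  have hGaSome : ∀ x w : V, x ∈ C → S.parent x = some w → Ga.parent x = some w := by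
    intro x w hx hp
    rw [hGap]
    exact (graftP_spec x w).mpr (Or.inl ⟨hx, hp⟩)
  have hGbSome : ∀ x w : V, x ∈ C → Sb.parent x = some w → Gb.parent x = some w := by
    intro x w hx hp
    rw [hGbp]
    exact (graftP_spec x w).mpr (Or.inl ⟨hx, hp⟩)
  refine ⟨hGaSome c' p' hc'C h1, hGbs.trans hGas.symm, ?_, hGbSome p' c' hp'C h4, ?_, ?_⟩
  · -- Gb.parent c' = Ga.parent p'
    rw [hGap, hGbp]
    unfold graftP
    rw [if_pos hc'C, if_pos hp'C, h3]
  · intro x hxp hx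
    have hx' : x ∈ C ∧ S.parent x = some c' := by
      rcases (graftP_spec x c').mp (by rw [← hGap]; exact hx) with
        ⟨hxC, hp⟩ | ⟨hxC, _, he⟩ | ⟨hxC, hp⟩
      · exact ⟨hxC, hp⟩
      · exact absurd (he ▸ hc'C) hrC
      · exact absurd (hcl x c' hp hc'C) hxC
    have hdesc : Ga.descSet x = S.descSet x :=
      graft_descSet hS hCsub hrs hrn hrC hcl hGap hx'.1
    have h5x := h5 x hxp hx'.2
    constructor
    · intro hcond
      exact hGbSome x p' hx'.1 (h5x.1 (by rw [← hdesc]; exact hcond))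
    · intro hcond
      exact hGbSome x c' hx'.1 (h5x.2 (by rw [← hdesc]; exact hcond))
  · intro x hxc hxp hnx
    by_cases hxC : x ∈ C
    · have hSax : S.parent x ≠ some c' := fun he => hnx (hGaSome x c' hxC he)
      have heq := h6 x hxc hxp hSax
      rw [hGap, hGbp]
      unfold graftP
      rw [if_pos hxC, if_pos hxC, heq]
    · rw [hGap, hGbp]
      unfold graftP
      rw [if_neg hxC, if_neg hxC]

lemma graft_reaches : ∀ (k : ℕ) (Sa Sb Ga : RTree V), Sa.supp = C →
    ReachesIn G k Sa Sb → Ga.supp = T.supp → Ga.parent = graftP T Sa C r →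
    ∃ Gb : RTree V, Gb.supp = T.supp ∧ Gb.parent = graftP T Sb C r ∧
      ReachesIn G k Ga Gb := by
  intro k
  induction k with
  | zero =>
    intro Sa Sb Ga hSa hreach hGas hGap
    cases hreach
    exact ⟨Ga, hGas, hGap, rfl⟩
  | succ k ih =>
    intro Sa Sb Ga hSa hreach hGas hGap
    obtain ⟨S', ⟨p', c', hrot⟩, hrest⟩ := hreach
    have hS' : S'.supp = C := hrot.2.1.trans hSa
    obtain ⟨G', hG's, hG'p⟩ := graft_exists (S := S') hS' hCsub hrs hrn hrC hcl
    have hlift := graft_rot (S := Sa) hSa hCsub hrs hrn hrC hcl hGas hGap hG's hG'p hrot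
    obtain ⟨Gb, hb1, hb2, hb3⟩ := ih S' Sb G' hS' hrest hG's hG'p
    exact ⟨Gb, hb1, hb2, G', ⟨p', c', hlift⟩, hb3⟩

end Graft


/- ===================== Main lemma ===================== -/

section MainSec

variable {G : SimpleGraph V}

lemma restrictP_none_of {T : RTree V} {C : Finset V} {v w : V} (hv : v ∈ C)
    (hp : T.parent v = some w) (hw : w ∉ C) : restrictP T C v = none := by
  unfold restrictP
  rw [if_pos hv]
  simp only [hp]
  rw [if_neg hw]

lemma graftP_notmem {T S : RTree V} {C : Finset V} {r v : V} (hv : v ∉ C) :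
    graftP T S C r v = T.parent v := by
  unfold graftP
  rw [if_neg hv]

lemma graftP_of_none {T S : RTree V} {C : Finset V} {r v : V} (hv : v ∈ C)
    (hp : S.parent v = none) : graftP T S C r v = some r := by
  unfold graftP
  rw [if_pos hv]
  simp only [hp]

lemma graftP_of_some {T S : RTree V} {C : Finset V} {r v w : V} (hv : v ∈ C)
    (hp : S.parent v = some w) : graftP T S C r v = some w := by
  unfold graftP
  rw [if_pos hv]
  simp only [hp]

lemma main_lemma [Fintype V] :
    ∀ (n : ℕ) (U : Finset V) (T1 T2 : RTree V), U.card ≤ n →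
      IsSTGOn G U T1 → IsSTGOn G U T2 → ∃ k, ReachesIn G k T1 T2 := by
  intro n
  induction n with
  | zero =>
    intro U T1 T2 hcard h1 h2
    have hU : U = ∅ := Finset.card_eq_zero.mp (Nat.le_zero.mp hcard)
    exact ⟨0, show T1 = T2 from stg_empty_eq (hU ▸ h1.1) (hU ▸ h2.1)⟩
  | succ n ih =>
    intro U T1 T2 hcard h1 h2
    classical
    by_cases hUe : U = ∅
    · exact ⟨0, show T1 = T2 from stg_empty_eq (hUe ▸ h1.1) (hUe ▸ h2.1)⟩
    obtain ⟨v0, hv0⟩ := Finset.nonempty_iff_ne_empty.mpr hUe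
    obtain ⟨r, hrs2, h2r, _⟩ := T2.reaches_root v0 (h2.1.symm ▸ hv0)
    have hrU : r ∈ U := h2.1 ▸ hrs2
    obtain ⟨k1, T1', hreach1, h1', h1r⟩ :=
      step_to_root (U := U) (r := r) (Set.ncard {a | Ch T1 r a}) T1 h1 le_rfl
    have h1s : T1'.supp = U := h1'.1
    have hrs1 : r ∈ T1'.supp := h1s.symm ▸ hrU
    have toRoot : ∀ (T : RTree V), IsSTGOn G U T → T.parent r = none →
        ∀ v ∈ U, Ch T v r := by
      intro T hT hTr v hv
      obtain ⟨r1, hr1s, hr1n, hch⟩ := T.reaches_root v (hT.1.symm ▸ hv)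
      have : r1 = r := T.root_unique r1 hr1s r (hT.1.symm ▸ hrU) hr1n hTr
      exact this ▸ hch
    set children := U.filter (fun y => T2.parent y = some r) with hchildren
    have getc1 : ∀ y ∈ children, ∃ c1, T1'.parent c1 = some r ∧
        T2.descSet y = T1'.descSet c1 := by
      intro y hy
      have hy2 := (Finset.mem_filter.mp hy).2
      have hyU := (Finset.mem_filter.mp hy).1
      have hyr : y ≠ r := fun e => by rw [e, h2r] at hy2; cases hy2
      obtain ⟨c1, hc1, hyc1⟩ := ch_to_child (toRoot T1' h1' h1r y hyU) hyr
      exact ⟨c1, hc1,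
        subtree_eq h2 h1' h2r h1r hy2 hc1 Relation.ReflTransGen.refl hyc1⟩
    have hcl1 : ∀ (S : Finset V), S ⊆ children → ∀ v w : V,
        (∃ y ∈ S, Ch T2 w y) → T1'.parent v = some w → ∃ y ∈ S, Ch T2 v y := by
      rintro S hSc v w ⟨y, hyS, hwy⟩ hp
      obtain ⟨c1, hc1, hdesc⟩ := getc1 y (hSc hyS)
      have hw : w ∈ T1'.descSet c1 := hdesc ▸ hwy
      have hv : Ch T1' v c1 := ch_head hp hw
      exact ⟨y, hyS, show v ∈ T2.descSet y by rw [hdesc]; exact hv⟩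
    have mixEx : ∀ S : Finset V, S ⊆ children →
        ∃ M : RTree V, M.supp = T1'.supp ∧ M.parent = mixP T1' T2 S := by
      intro S hSc
      exact mix_exists (h1s.trans h2.1.symm) h1r h2r hrs1
        (fun y hy => (Finset.mem_filter.mp (hSc hy)).2) (hcl1 S hSc)
    have inner : ∀ (m : ℕ) (S : Finset V), S ⊆ children → ∀ (M : RTree V),
        M.supp = T1'.supp → M.parent = mixP T1' T2 S → (children \ S).card ≤ m →
        ∃ k, ReachesIn G k M T2 := by
      intro m
      induction m with
      | zero =>
        intro S hSc M hMs hMp hle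
        have hSeq : children ⊆ S := by
          rw [← Finset.sdiff_eq_empty_iff_subset]
          exact Finset.card_eq_zero.mp (Nat.le_zero.mp hle)
        refine ⟨0, show M = T2 from rtree_ext (hMs.trans (h1s.trans h2.1.symm)) ?_⟩
        funext v
        rw [hMp]
        by_cases hb : ∃ y ∈ S, Ch T2 v y
        · rw [mixP_pos hb]
        · rw [mixP_neg hb]
          by_cases hvU : v ∈ U
          · by_cases hvr : v = r
            · rw [hvr, h1r, h2r]
            · exfalso
              obtain ⟨y, hy, hvy⟩ := ch_to_child (toRoot T2 h2 h2r v hvU) hvr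
              have hyU : y ∈ U := h2.1 ▸ (T2.mem_of_parent hy).1
              exact hb ⟨y, hSeq (Finset.mem_filter.mpr ⟨hyU, hy⟩), hvy⟩
          · rw [T1'.parent_eq_none v (fun h => hvU (h1s ▸ h)),
              T2.parent_eq_none v (fun h => hvU (h2.1 ▸ h))]
      | succ m ihm =>
        intro S hSc M hMs hMp hle
        rcases Nat.eq_zero_or_pos (children \ S).card with h0 | hpos
        · exact ihm S hSc M hMs hMp (by omega)
        obtain ⟨c2, hc2⟩ := Finset.card_pos.mp hpos
        have hc2ch : c2 ∈ children := (Finset.mem_sdiff.mp hc2).1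
        have hc2S : c2 ∉ S := (Finset.mem_sdiff.mp hc2).2
        have hc2U : c2 ∈ U := (Finset.mem_filter.mp hc2ch).1
        have hc2r : T2.parent c2 = some r := (Finset.mem_filter.mp hc2ch).2
        set C := U.filter (fun v => Ch T2 v c2) with hCdef
        have hmemC2 : ∀ v, Ch T2 v c2 → v ∈ U := by
          intro v hv
          by_cases he : v = c2
          · exact he ▸ hc2U
          · exact h2.1 ▸ (mem_supp_of_ch hv he).1
        have hCset : (↑C : Set V) = T2.descSet c2 := by
          ext v
          constructor
          · intro hv
            exact (Finset.mem_filter.mp (Finset.mem_coe.mp hv)).2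
          · intro hv
            exact Finset.mem_coe.mpr (Finset.mem_filter.mpr ⟨hmemC2 v hv, hv⟩)
        have hc2C : c2 ∈ C := Finset.mem_filter.mpr ⟨hc2U, Relation.ReflTransGen.refl⟩
        obtain ⟨c1, hc1, hdesc⟩ := getc1 c2 hc2ch
        have hCset1 : (↑C : Set V) = T1'.descSet c1 := hCset.trans hdesc
        have hc1s : c1 ∈ T1'.supp := (T1'.mem_of_parent hc1).1
        obtain ⟨S1, hS1s, hS1p⟩ := restrict_exists T1' C hCset1 hc1s
        obtain ⟨S2, hS2s, hS2p⟩ := restrict_exists T2 C hCset (h2.1.symm ▸ hc2U)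
        have hSTG1 : IsSTGOn G C S1 := restrict_STG h1' hCset1 (h1s ▸ hc1s) hS1s hS1p
        have hSTG2 : IsSTGOn G C S2 := restrict_STG h2 hCset hc2U hS2s hS2p
        have hrCnot : r ∉ C := by
          intro h
          have h3 := (Finset.mem_filter.mp h).2
          have h4 : r = c2 := ch_of_none h2r h3
          rw [← h4] at hc2r
          rw [hc2r] at h2r
          cases h2r
        have hCcard : C.card ≤ n := by
          have hsub : C ⊆ U := Finset.filter_subset _ _
          have : C.card < U.card :=
            Finset.card_lt_card ⟨hsub, fun hUC => hrCnot (hUC hrU)⟩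
          omega
        obtain ⟨k2, hk2⟩ := ih C S1 S2 hCcard hSTG1 hSTG2
        have hCsubM : ∀ v ∈ C, v ∈ M.supp := by
          intro v hv
          rw [hMs, h1s]
          exact Finset.filter_subset _ _ hv
        have hrsM : r ∈ M.supp := hMs.symm ▸ hrs1
        have hrnbS : ¬ ∃ y ∈ S, Ch T2 r y := by
          rintro ⟨y, hyS, hry⟩
          have h4 : r = y := ch_of_none h2r hry
          have h5 := (Finset.mem_filter.mp (hSc hyS)).2
          rw [← h4] at h5
          rw [h5] at h2r
          cases h2r
        have hrnM : M.parent r = none := by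
          rw [hMp, mixP_neg hrnbS]
          exact h1r
        have hclM : ∀ v w : V, M.parent v = some w → w ∈ C → v ∈ C := by
          intro v w hp hwC
          rw [hMp] at hp
          have hwC2 : Ch T2 w c2 := (Finset.mem_filter.mp hwC).2
          by_cases hb : ∃ y ∈ S, Ch T2 v y
          · rw [mixP_pos hb] at hp
            have h3 : Ch T2 v c2 := ch_head hp hwC2
            exact Finset.mem_filter.mpr ⟨hmemC2 v h3, h3⟩
          · rw [mixP_neg hb] at hp
            have hw1 : w ∈ T1'.descSet c1 := hdesc ▸ hwC2
            have hv1 : Ch T1' v c1 := ch_head hp hw1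
            have hvC2 : Ch T2 v c2 := by
              show v ∈ T2.descSet c2
              rw [hdesc]; exact hv1
            exact Finset.mem_filter.mpr ⟨hmemC2 v hvC2, hvC2⟩
        -- disjointness of C from the already-processed subtrees
        have hdisjC : ∀ v ∈ C, ¬ ∃ y ∈ S, Ch T2 v y := by
          intro v hvC
          rintro ⟨y, hyS, hvy⟩
          have hvc2 : Ch T2 v c2 := (Finset.mem_filter.mp hvC).2
          have hyr : T2.parent y = some r := (Finset.mem_filter.mp (hSc hyS)).2
          have heqd : T2.descSet c2 = T2.descSet y :=
            subtree_eq h2 h2 h2r h2r hc2r hyr hvc2 hvy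
          have hc2y : Ch T2 c2 y := by
            show c2 ∈ T2.descSet y
            rw [← heqd]; exact Relation.ReflTransGen.refl
          rcases Relation.ReflTransGen.cases_head hc2y with he | ⟨z, hz, hzy⟩
          · exact hc2S (he ▸ hyS)
          · have hzr : z = r := pstep_det hz hc2r
            rw [hzr] at hzy
            have h4 : r = y := ch_of_none h2r hzy
            rw [← h4] at hyr
            rw [hyr] at h2r
            cases h2r
        -- M is the graft of S1 into M  (E2)
        have hMgraft : M.parent = graftP M S1 C r := by
          funext v
          by_cases hvC : v ∈ C
          · have hvc1 : Ch T1' v c1 := by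
              show v ∈ T1'.descSet c1
              rw [← hCset1]; exact Finset.mem_coe.mpr hvC
            have hMv : M.parent v = T1'.parent v := by
              rw [hMp]; exact mixP_neg (hdisjC v hvC)
            cases hp : T1'.parent v with
            | none =>
              exfalso
              have hvU : v ∈ T1'.supp := by
                rw [h1s]; exact Finset.filter_subset _ _ hvC
              have : v = r := T1'.root_unique v hvU r hrs1 hp h1r
              exact hrCnot (this ▸ hvC)
            | some w =>
              by_cases hwC : w ∈ C
              · rw [hMv, hp,
                  graftP_of_some hvC (by rw [hS1p]; exact (restrictP_spec v w).mpr ⟨hvC, hwC, hp⟩)]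
              · have hvc1' : v = c1 := by
                  rcases Relation.ReflTransGen.cases_head hvc1 with he | ⟨z, hz, hzc1⟩
                  · exact he
                  · exfalso
                    have hzw : z = w := pstep_det hz hp
                    rw [hzw] at hzc1
                    exact hwC (Finset.mem_coe.mp (hCset1.symm ▸ (hzc1 : w ∈ T1'.descSet c1)))
                have hwr : w = r := by
                  rw [hvc1'] at hp
                  exact Option.some.inj (hp.symm.trans hc1)
                rw [hMv, hp, hwr,
                  graftP_of_none hvC (by rw [hS1p]; exact restrictP_none_of hvC hp hwC)]
          · rw [graftP_notmem hvC]
        obtain ⟨Gb, hGbs, hGbp, hGbreach⟩ :=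
          graft_reaches (S := S1) hS1s hCsubM hrsM hrnM hrCnot hclM k2 S1 S2 M hS1s hk2 rfl hMgraft
        -- Gb is the mix over (insert c2 S)  (E1)
        have hGbp2 : Gb.parent = mixP T1' T2 (insert c2 S) := by
          rw [hGbp]
          funext v
          by_cases hvC : v ∈ C
          · have hcond : ∃ y ∈ insert c2 S, Ch T2 v y :=
              ⟨c2, Finset.mem_insert_self c2 S, (Finset.mem_filter.mp hvC).2⟩
            rw [mixP_pos hcond]
            cases hp : T2.parent v with
            | none =>
              exfalso
              have : v = r := T2.root_unique v (h2.1.symm ▸ hmemC2 v (Finset.mem_filter.mp hvC).2)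
                r hrs2 hp h2r
              exact hrCnot (this ▸ hvC)
            | some w =>
              by_cases hwC : w ∈ C
              · rw [graftP_of_some hvC (by rw [hS2p]; exact (restrictP_spec v w).mpr ⟨hvC, hwC, hp⟩)]
              · have hvc2' : v = c2 := by
                  rcases Relation.ReflTransGen.cases_head
                    ((Finset.mem_filter.mp hvC).2 : Ch T2 v c2) with he | ⟨z, hz, hzc2⟩
                  · exact he
                  · exfalso
                    have hzw : z = w := pstep_det hz hp
                    rw [hzw] at hzc2
                    exact hwC (Finset.mem_coe.mp (hCset.symm ▸ (hzc2 : w ∈ T2.descSet c2)))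
                have hwr : w = r := by
                  rw [hvc2'] at hp
                  exact Option.some.inj (hp.symm.trans hc2r)
                rw [graftP_of_none hvC (by rw [hS2p]; exact restrictP_none_of hvC hp hwC), hwr]
          · rw [graftP_notmem hvC, hMp]
            by_cases hb : ∃ y ∈ S, Ch T2 v y
            · obtain ⟨y, hyS, hvy⟩ := hb
              rw [mixP_pos ⟨y, hyS, hvy⟩,
                mixP_pos ⟨y, Finset.mem_insert_of_mem hyS, hvy⟩]
            · have hb2 : ¬ ∃ y ∈ insert c2 S, Ch T2 v y := by
                rintro ⟨y, hyI, hvy⟩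
                rcases Finset.mem_insert.mp hyI with rfl | hyS
                · exact hvC (Finset.mem_filter.mpr ⟨hmemC2 v hvy, hvy⟩)
                · exact hb ⟨y, hyS, hvy⟩
              rw [mixP_neg hb, mixP_neg hb2]
        have hcard2 : (children \ insert c2 S).card ≤ m := by
          have he : children \ insert c2 S = (children \ S).erase c2 := by
            ext x
            simp only [Finset.mem_sdiff, Finset.mem_erase, Finset.mem_insert]
            tauto
          rw [he, Finset.card_erase_of_mem hc2]
          omega
        obtain ⟨k3, hk3⟩ := ihm (insert c2 S) (Finset.insert_subset hc2ch hSc) Gb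
          (hGbs.trans hMs) hGbp2 hcard2
        exact reaches_trans hGbreach hk3
    obtain ⟨M0, hM0s, hM0p⟩ := mixEx ∅ (Finset.empty_subset _)
    have hM0T1 : M0 = T1' := by
      refine rtree_ext hM0s ?_
      rw [hM0p]
      funext v
      rw [mixP_neg (by rintro ⟨y, hy, _⟩; exact Finset.notMem_empty y hy)]
    obtain ⟨k4, hk4⟩ := inner (children \ ∅).card ∅ (Finset.empty_subset _) M0 hM0s hM0p le_rfl
    rw [hM0T1] at hk4
    exact reaches_trans hreach1 hk4

end MainSec

end RotAux

/-- the rotation graph of the search trees on a connected graph is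
connected. -/
theorem rotation_graph_connected {V : Type} [Fintype V]
    (G : SimpleGraph V) (hG : G.Connected)
    (T1 T2 : RTree V) (h1 : IsSTG G T1) (h2 : IsSTG G T2) :
    ∃ k : ℕ, ReachesIn G k T1 T2 := by
  exact RotAux.main_lemma (G := G) Finset.univ.card Finset.univ T1 T2 le_rfl h1 h2
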